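/- Let A₁ = [[4,2],[2,2]] and A₂ = [[2,1],[1,1]] be symmetric positive definite 2×2 real matrices, and let μⱼ be the centered Gaussian measures on ℝ² with characteristic functions μ̂ⱼ(y) = exp(−⟨Aⱼ y, y⟩). Let α : ℝ² → ℝ² be the automorphism α(x) = −2x, with adjoint α̃(y) = −2y. Then the characteristic functions satisfy the Heyde equation μ̂₁(u+v)·μ̂₂(u+α̃v) = μ̂₁(u−v)·μ̂₂(u−α̃v) for all u, v ∈ ℝ², yet neither μ₁ nor μ₂ is a product measure of the form γ ⊗ ω with γ a one-dimensional Gaussian on the first factor. -/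

import Mathlib

open MeasureTheory

/-- The characteristic function of a measure on `ℝ × ℝ`. -/
noncomputable def charFunR2 (μ : Measure (ℝ × ℝ)) (y : ℝ × ℝ) : ℂ :=
  ∫ x, Complex.exp (Complex.I * (y.1 * x.1 + y.2 * x.2)) ∂μ

/-- The quadratic form `⟨A₁ y, y⟩` of `A₁ = [[4,2],[2,2]]`. -/
def q₁ (y : ℝ × ℝ) : ℝ := 4 * y.1 ^ 2 + 4 * y.1 * y.2 + 2 * y.2 ^ 2

/-- The quadratic form `⟨A₂ y, y⟩` of `A₂ = [[2,1],[1,1]]`. -/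
def q₂ (y : ℝ × ℝ) : ℝ := 2 * y.1 ^ 2 + 2 * y.1 * y.2 + y.2 ^ 2

/-- The Gaussian measures on `ℝ²` with covariance forms `A₁ = [[4,2],[2,2]]`,
`A₂ = [[2,1],[1,1]]` satisfy the Heyde equation for `α = -2I`, the forms are positive
definite, yet neither measure is a product `γ ⊗ ω` with `γ` a one-dimensional Gaussian
on the first factor. -/
theorem gaussian_counterexample_on_R2 (μ₁ μ₂ : Measure (ℝ × ℝ))
    [IsProbabilityMeasure μ₁] [IsProbabilityMeasure μ₂]
    (h₁ : ∀ y : ℝ × ℝ, charFunR2 μ₁ y = Complex.exp (-(q₁ y : ℂ)))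
    (h₂ : ∀ y : ℝ × ℝ, charFunR2 μ₂ y = Complex.exp (-(q₂ y : ℂ))) :
    (∀ y : ℝ × ℝ, y ≠ 0 → 0 < q₁ y ∧ 0 < q₂ y) ∧
    (∀ y : ℝ × ℝ, q₁ y = 2 * q₂ y) ∧
    (∀ u v : ℝ × ℝ,
      charFunR2 μ₁ (u + v) * charFunR2 μ₂ (u + (-2 : ℝ) • v) =
      charFunR2 μ₁ (u - v) * charFunR2 μ₂ (u - (-2 : ℝ) • v)) ∧
    (¬ ∃ (σ b : ℝ) (g : ℝ → ℂ), 0 ≤ σ ∧ ∀ y : ℝ × ℝ,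
      charFunR2 μ₁ y = Complex.exp (Complex.I * b * y.1 - σ * y.1 ^ 2) * g y.2) ∧
    (¬ ∃ (σ b : ℝ) (g : ℝ → ℂ), 0 ≤ σ ∧ ∀ y : ℝ × ℝ,
      charFunR2 μ₂ y = Complex.exp (Complex.I * b * y.1 - σ * y.1 ^ 2) * g y.2) := by
  refine ⟨?_, ?_, ?_, ?_, ?_⟩
  · -- positivity
    intro y hy
    have hy' : y.1 ≠ 0 ∨ y.2 ≠ 0 := by
      by_contra h
      push_neg at h
      exact hy (Prod.ext h.1 h.2)
    simp only [q₁, q₂]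
    constructor
    · rcases hy' with h | h
      · nlinarith [sq_nonneg (2 * y.1 + y.2), sq_nonneg y.2, sq_pos_of_ne_zero h]
      · nlinarith [sq_nonneg (2 * y.1 + y.2), sq_pos_of_ne_zero h]
    · rcases hy' with h | h
      · nlinarith [sq_nonneg (y.1 + y.2), sq_pos_of_ne_zero h]
      · nlinarith [sq_nonneg (y.1 + y.2), sq_nonneg y.1, sq_pos_of_ne_zero h]
  · intro y; simp only [q₁, q₂]; ring
  · -- Heyde equation
    intro u v
    rw [h₁, h₁, h₂, h₂, ← Complex.exp_add, ← Complex.exp_add]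
    congr 1
    have : q₁ (u + v) + q₂ (u + (-2 : ℝ) • v) = q₁ (u - v) + q₂ (u - (-2 : ℝ) • v) := by
      simp only [q₁, q₂, Prod.fst_add, Prod.snd_add, Prod.fst_sub, Prod.snd_sub,
        Prod.smul_fst, Prod.smul_snd, smul_eq_mul]
      ring
    exact_mod_cast show -q₁ (u + v) + -q₂ (u + (-2 : ℝ) • v) =
        -q₁ (u - v) + -q₂ (u - (-2 : ℝ) • v) by linarith [this]
  · -- μ₁ not a product
    rintro ⟨σ, b, g, hσ, hg⟩
    have hA := (h₁ (1, 1)).symm.trans (hg (1, 1))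
    have hB := (h₁ (1, -1)).symm.trans (hg (1, -1))
    have hC := (h₁ (0, 1)).symm.trans (hg (0, 1))
    have hD := (h₁ (0, -1)).symm.trans (hg (0, -1))
    simp only [q₁] at hA hB hC hD
    norm_num at hA hB hC hD
    -- hC : exp(-2) = g 1 (modulo exp 0 = 1), similarly hD : exp(-2) = g (-1)
    rw [← hC] at hA
    rw [← hD] at hB
    -- hA : exp(-10) = E * exp(-2), hB : exp(-2) = E * exp(-2)
    have hE : Complex.exp (-10 : ℂ) = Complex.exp (-2 : ℂ) := by
      rw [hA, ← hB]
    have := congrArg (fun z : ℂ => ‖z‖) hE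
    rw [Complex.norm_exp, Complex.norm_exp] at this
    norm_num at this
  · -- μ₂ not a product
    rintro ⟨σ, b, g, hσ, hg⟩
    have hA := (h₂ (1, 1)).symm.trans (hg (1, 1))
    have hB := (h₂ (1, -1)).symm.trans (hg (1, -1))
    have hC := (h₂ (0, 1)).symm.trans (hg (0, 1))
    have hD := (h₂ (0, -1)).symm.trans (hg (0, -1))
    simp only [q₂] at hA hB hC hD
    norm_num at hA hB hC hD
    rw [← hC] at hA
    rw [← hD] at hB
    have hE : Complex.exp (-5 : ℂ) = Complex.exp (-1 : ℂ) := by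
      rw [hA, ← hB]
    have := congrArg (fun z : ℂ => ‖z‖) hE
    rw [Complex.norm_exp, Complex.norm_exp] at this
    norm_num at this
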